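/- Let M ∈ ℝ^{m×n}, P ∈ ℝ^{n×k}, Q ∈ ℝ^{m×k}, B ∈ ℝ^{k×k}, r ∈ ℝⁿ, and α ∈ ℝ. Assume M P = Q B, Mᵀ Q = P Bᵀ + r e_kᵀ, and that the last row of B equals α e_kᵀ (i.e., e_kᵀ B = α e_kᵀ, which holds with α = B_{kk} when B is upper bidiagonal). Then Mᵀ M P = P (Bᵀ B) + α r e_kᵀ. -/

import Mathlib

open Matrix

noncomputable section

/-- `e_k`: the last standard basis vector of `ℝᵏ` (the `k`-th column of `I_k`). -/
def eLast (k : ℕ) : Fin k → ℝ := fun i => if (i : ℕ) = k - 1 then 1 else 0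

/-- from `M P = Q B`, `Mᵀ Q = P Bᵀ + r e_kᵀ` and `e_kᵀ B = α e_kᵀ`,
deduce `Mᵀ M P = P (Bᵀ B) + α r e_kᵀ`. -/
theorem lanczos_tridiagonalization_right {m n k : ℕ}
    (M : Matrix (Fin m) (Fin n) ℝ) (P : Matrix (Fin n) (Fin k) ℝ)
    (Q : Matrix (Fin m) (Fin k) ℝ) (B : Matrix (Fin k) (Fin k) ℝ)
    (r : Fin n → ℝ) (α : ℝ)
    (h1 : M * P = Q * B)
    (h2 : Mᵀ * Q = P * Bᵀ + vecMulVec r (eLast k))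
    (h3 : vecMul (eLast k) B = α • eLast k) :
    Mᵀ * M * P = P * (Bᵀ * B) + α • vecMulVec r (eLast k) := by
  have key : vecMulVec r (eLast k) * B = α • vecMulVec r (eLast k) := by
    ext i j
    simp only [vecMulVec_apply, mul_apply, Matrix.smul_apply, smul_eq_mul]
    have := congrFun h3 j
    simp only [vecMul, dotProduct, Pi.smul_apply, smul_eq_mul] at this
    calc ∑ x, r i * eLast k x * B x j = r i * ∑ x, eLast k x * B x j := by
          simp [Finset.mul_sum, mul_assoc]
      _ = r i * (α * eLast k j) := by rw [this]
      _ = α * (r i * eLast k j) := by ring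
  calc Mᵀ * M * P = Mᵀ * (Q * B) := by rw [Matrix.mul_assoc, h1]
    _ = (Mᵀ * Q) * B := by rw [Matrix.mul_assoc]
    _ = (P * Bᵀ + vecMulVec r (eLast k)) * B := by rw [h2]
    _ = P * (Bᵀ * B) + α • vecMulVec r (eLast k) := by
        rw [Matrix.add_mul, Matrix.mul_assoc, key]
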